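/- For a positive integer n and 1 ≤ j ≤ n, the tail sum ∑_{k=j}^{n} (k/n) · (n-1)_[k-1]/n^{k-1} equals (n-1)_[j-1]/n^{j-1}, where (n-1)_[k] denotes the falling factorial (n-1)(n-2)⋯(n-k). -/

import Mathlib

open Finset

theorem stmt_2 (n j : ℕ) (hn : 0 < n) (hj1 : 1 ≤ j) (hjn : j ≤ n) :
    ∑ k ∈ Finset.Icc j n,
        ((k : ℝ) / n) * (((n - 1).descFactorial (k - 1) : ℝ) / (n : ℝ) ^ (k - 1))
    = ((n - 1).descFactorial (j - 1) : ℝ) / (n : ℝ) ^ (j - 1) := by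
  have hn' : (n : ℝ) ≠ 0 := Nat.cast_ne_zero.mpr hn.ne'
  set f : ℕ → ℝ := fun k => ((n - 1).descFactorial k : ℝ) / (n : ℝ) ^ k with hf
  have key : ∀ k, 1 ≤ k → k ≤ n →
      ((k : ℝ) / n) * f (k - 1) = f (k - 1) - f k := by
    intro k hk1 hkn
    obtain ⟨m, rfl⟩ := Nat.exists_eq_add_of_le hk1
    rw [Nat.add_comm 1 m] at *
    simp only [hf, Nat.add_sub_cancel]
    have hdesc : (n - 1).descFactorial (m + 1) = (n - 1).descFactorial m * (n - 1 - m) := by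
      rw [Nat.descFactorial_succ, Nat.mul_comm]
    have hcast : ((n - 1 - m : ℕ) : ℝ) = (n : ℝ) - (m + 1 : ℕ) := by
      have h1 : ((n - 1 - m : ℕ) : ℝ) = ((n - (m + 1) : ℕ) : ℝ) := by
        congr 1; omega
      rw [h1, Nat.cast_sub hkn]
    rw [hdesc]
    push_cast [hcast]
    field_simp
    ring
  have step1 : ∑ k ∈ Finset.Icc j n,
      ((k : ℝ) / n) * (((n - 1).descFactorial (k - 1) : ℝ) / (n : ℝ) ^ (k - 1))
      = ∑ k ∈ Finset.Icc j n, (f (k - 1) - f k) := by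
    apply Finset.sum_congr rfl
    intro k hk
    rw [Finset.mem_Icc] at hk
    exact key k (hj1.trans hk.1) hk.2
  rw [step1]
  have hIcc : Finset.Icc j n = Finset.Ico j (n + 1) := by
    rw [Finset.Ico_add_one_right_eq_Icc]
  rw [hIcc, Finset.sum_Ico_eq_sum_range]
  have hshift : ∀ i, f (j + i - 1) - f (j + i) = f (j - 1 + i) - f (j - 1 + (i + 1)) := by
    intro i
    congr 2 <;> omega
  rw [Finset.sum_congr rfl (fun i _ => hshift i), Finset.sum_range_sub' (fun i => f (j - 1 + i))]
  have hfn : f (j - 1 + (n + 1 - j)) = 0 := by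
    have h : j - 1 + (n + 1 - j) = n := by omega
    rw [h, hf]
    simp [Nat.descFactorial_eq_zero_iff_lt.mpr (by omega : n - 1 < n)]
  rw [hfn, add_zero, sub_zero, hf]
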